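/- For every x ∈ int 𝓛^n, the linear map y ↦ Q_x y preserves the Lorentz cone and its interior: Q_x(𝓛^n) = 𝓛^n and Q_x(int 𝓛^n) = int 𝓛^n (i.e. the image of 𝓛^n under Q_x equals 𝓛^n, and likewise for the interior). -/

import Mathlib

set_option synthInstance.maxHeartbeats 1000000
set_option maxHeartbeats 1000000

noncomputable section
open scoped BigOperators

namespace SOCP

/-- `E k` is `ℝ^(k+1)`, written as `(x₀; x̄)` with `x̄ ∈ ℝ^k`. -/
abbrev E (k : ℕ) := EuclideanSpace ℝ (Fin (k + 1))

/-- Build an element of `E k` from a plain function. -/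
def mk {k : ℕ} (f : Fin (k + 1) → ℝ) : E k := (WithLp.equiv 2 _).symm f

/-- The Euclidean norm `‖x̄‖` of the tail of `x`. -/
def tnorm {k : ℕ} (x : E k) : ℝ := Real.sqrt (∑ i : Fin k, (x i.succ) ^ 2)

/-- First Jordan eigenvalue `λ₁(x) = x₀ + ‖x̄‖`. -/
def lam1 {k : ℕ} (x : E k) : ℝ := x 0 + tnorm x

/-- Second Jordan eigenvalue `λ₂(x) = x₀ − ‖x̄‖`. -/
def lam2 {k : ℕ} (x : E k) : ℝ := x 0 - tnorm x

/-- Jordan product `x ∘ y = (xᵀy; x₀ȳ + y₀x̄)`. -/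
def jmul {k : ℕ} (x y : E k) : E k :=
  mk (fun j => if j = 0 then ∑ i, x i * y i else x 0 * y j + y 0 * x j)

/-- The Jordan identity `e = (1; 0)`. -/
def idE {k : ℕ} : E k := mk (fun j => if j = 0 then 1 else 0)

/-- First Jordan frame vector `c₁(x) = ½(1; x̄/‖x̄‖)`. -/
def c1 {k : ℕ} (x : E k) : E k :=
  mk (fun j => if j = 0 then 1 / 2 else x j / (2 * tnorm x))

/-- Second Jordan frame vector `c₂(x) = ½(1; −x̄/‖x̄‖)`. -/
def c2 {k : ℕ} (x : E k) : E k :=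
  mk (fun j => if j = 0 then 1 / 2 else -x j / (2 * tnorm x))

/-- Arrowhead matrix `Arw(x) = [[x₀, x̄ᵀ], [x̄, x₀ I]]`. -/
def Arw {k : ℕ} (x : E k) : Matrix (Fin (k + 1)) (Fin (k + 1)) ℝ :=
  Matrix.of fun i j =>
    if i = 0 then x j else if j = 0 then x i else if i = j then x 0 else 0

/-- Quadratic representation `Q_x = 2 Arw(x)² − Arw(x ∘ x)`. -/
def Qmat {k : ℕ} (x : E k) : Matrix (Fin (k + 1)) (Fin (k + 1)) ℝ :=
  (2 : ℝ) • (Arw x * Arw x) - Arw (jmul x x)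

/-- Jordan square root `x^{1/2} = √λ₁ c₁ + √λ₂ c₂` (equal to `(√x₀; 0)` when `x̄ = 0`). -/
def jsqrt {k : ℕ} (x : E k) : E k :=
  if tnorm x = 0 then mk (fun j => if j = 0 then Real.sqrt (x 0) else 0)
  else Real.sqrt (lam1 x) • c1 x + Real.sqrt (lam2 x) • c2 x

/-- `T_x := Q_{x^{1/2}}`. -/
def Tmat {k : ℕ} (x : E k) : Matrix (Fin (k + 1)) (Fin (k + 1)) ℝ := Qmat (jsqrt x)

/-- Jordan inverse `x⁻¹ = λ₁⁻¹ c₁ + λ₂⁻¹ c₂` (equal to `(x₀⁻¹; 0)` when `x̄ = 0`). -/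
def jinv {k : ℕ} (x : E k) : E k :=
  if tnorm x = 0 then mk (fun j => if j = 0 then (x 0)⁻¹ else 0)
  else (lam1 x)⁻¹ • c1 x + (lam2 x)⁻¹ • c2 x

/-- Matrix-vector product, as a map on `E k`. -/
def mulVecE {k : ℕ} (M : Matrix (Fin (k + 1)) (Fin (k + 1)) ℝ) (v : E k) : E k :=
  mk (M.mulVec (WithLp.equiv 2 _ v))

/-- Block vectors `x = (x₁; …; x_r)` with `x_i ∈ ℝ^{d i + 2}` (so each block has dim ≥ 2). -/
abbrev BV {r : ℕ} (d : Fin r → ℕ) : Type := (i : Fin r) → E (d i + 1)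

variable {r : ℕ} {d : Fin r → ℕ}

/-- Spectral norm `‖x‖₂ = max_i (|x_{i,0}| + ‖x̄_i‖)`. -/
def specNorm (x : BV d) : ℝ := ⨆ i, (|x i 0| + tnorm (x i))

/-- Frobenius norm `‖x‖_F = √(Σ_i (λ₁(x_i)² + λ₂(x_i)²))`. -/
def frobNorm (x : BV d) : ℝ := Real.sqrt (∑ i, (lam1 (x i) ^ 2 + lam2 (x i) ^ 2))

/-- Minimum Jordan eigenvalue `λ_min(x) = min_i λ₂(x_i)`. -/
def lamMin (x : BV d) : ℝ := ⨅ i, lam2 (x i)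

/-- Blockwise Jordan product. -/
def jmulB (x y : BV d) : BV d := fun i => jmul (x i) (y i)

/-- Block identity element. -/
def idB : BV d := fun _ => idE

/-- Membership in the interior of the product of Lorentz cones: `‖x̄_i‖ < x_{i,0}` for all `i`. -/
def inIntLB (x : BV d) : Prop := ∀ i, tnorm (x i) < x i 0

/-- Euclidean inner product of the concatenated vectors. -/
def ip (x y : BV d) : ℝ := ∑ i, ∑ j, x i j * y i j

/-- Block-diagonal application of `T_x`: `(T_x s)_i = T_{x_i} s_i`. -/
def TB (x s : BV d) : BV d := fun i => mulVecE (Tmat (x i)) (s i)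

/-- Distance from the central path `d(x, s, ν) = ‖T_x s − ν e‖_F`. -/
def cdist (x s : BV d) (ν : ℝ) : ℝ := frobNorm (TB x s - ν • (idB : BV d))

/-- Blockwise Jordan inverse. -/
def jinvB (x : BV d) : BV d := fun i => jinv (x i)


-- auxiliary lemmas
lemma mk_apply {k : ℕ} (f : Fin (k + 1) → ℝ) (j : Fin (k+1)) : mk f j = f j := rfl

def St {k : ℕ} (x y : E k) : ℝ := ∑ i : Fin k, x i.succ * y i.succ

lemma St_comm {k : ℕ} (x y : E k) : St x y = St y x :=
  Finset.sum_congr rfl fun i _ => mul_comm _ _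

lemma St_expand {k : ℕ} (w : E k) (f : Fin (k+1) → ℝ) (c d : ℝ) (x y : E k)
    (hf : ∀ i : Fin k, f i.succ = c * x i.succ + d * y i.succ) :
    ∑ i : Fin k, w i.succ * f i.succ = c * St w x + d * St w y := by
  unfold St
  rw [show (∑ i : Fin k, w i.succ * f i.succ)
      = ∑ i : Fin k, (c * (w i.succ * x i.succ) + d * (w i.succ * y i.succ)) from
    Finset.sum_congr rfl fun i _ => by rw [hf i]; ring]
  rw [Finset.sum_add_distrib, ← Finset.mul_sum, ← Finset.mul_sum]

lemma tnorm_eq {k : ℕ} (x : E k) : tnorm x = Real.sqrt (St x x) := by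
  unfold tnorm St; congr 1; exact Finset.sum_congr rfl fun i _ => by ring

lemma St_self_nonneg {k : ℕ} (x : E k) : 0 ≤ St x x :=
  Finset.sum_nonneg fun i _ => mul_self_nonneg _

lemma cs {k : ℕ} (x y : E k) : (St x y)^2 ≤ St x x * St y y := by
  have h := Finset.sum_mul_sq_le_sq_mul_sq Finset.univ (fun i : Fin k => x i.succ)
    (fun i => y i.succ)
  simpa [St, pow_two] using h

lemma mem_iff {k : ℕ} (y : E k) : tnorm y ≤ y 0 ↔ 0 ≤ y 0 ∧ St y y ≤ y 0 ^ 2 := by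
  rw [tnorm_eq, Real.sqrt_le_iff]

lemma mem_strict_iff {k : ℕ} (y : E k) : tnorm y < y 0 ↔ 0 < y 0 ∧ St y y < y 0 ^ 2 := by
  rw [tnorm_eq]
  constructor
  · intro h
    have h0 : 0 < y 0 := lt_of_le_of_lt (Real.sqrt_nonneg _) h
    exact ⟨h0, (Real.sqrt_lt' h0).mp h⟩
  · rintro ⟨h0, h1⟩; exact (Real.sqrt_lt' h0).mpr h1

lemma arw_row0 {k : ℕ} (x : E k) (v : Fin (k+1) → ℝ) :
    (∑ l, Arw x 0 l * v l) = x 0 * v 0 + ∑ i : Fin k, x i.succ * v i.succ := by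
  have h : ∀ l, Arw x 0 l = x l := fun l => by simp [Arw]
  simp only [h]
  rw [Fin.sum_univ_succ]

lemma arw_row_succ {k : ℕ} (x : E k) (v : Fin (k+1) → ℝ) (i : Fin k) :
    (∑ l, Arw x i.succ l * v l) = v 0 * x i.succ + x 0 * v i.succ := by
  simp only [Arw, Matrix.of_apply]
  rw [Fin.sum_univ_succ]
  simp [Fin.succ_ne_zero, Fin.succ_inj, mul_comm]

lemma jmul_self0 {k : ℕ} (x : E k) : jmul x x 0 = x 0 * x 0 + St x x := by
  rw [jmul, mk_apply, if_pos rfl, Fin.sum_univ_succ]; rfl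

lemma jmul_self_succ {k : ℕ} (x : E k) (i : Fin k) :
    jmul x x i.succ = 2 * (x 0 * x i.succ) := by
  rw [jmul, mk_apply, if_neg (Fin.succ_ne_zero i)]; ring

lemma Q_apply0 {k : ℕ} (x y : E k) :
    mulVecE (Qmat x) y 0 = (x 0 * x 0 + St x x) * y 0 + 2 * x 0 * St x y := by
  have hv : mulVecE (Qmat x) y 0
      = 2 * (∑ l, Arw x 0 l * ((Arw x).mulVec ⇑y) l) - ∑ l, Arw (jmul x x) 0 l * y l := by
    show ((Qmat x).mulVec ⇑y) 0 = _
    rw [Qmat, Matrix.sub_mulVec, Matrix.smul_mulVec, ← Matrix.mulVec_mulVec]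
    rfl
  rw [hv, arw_row0, arw_row0]
  have h1 : ((Arw x).mulVec ⇑y) 0 = x 0 * y 0 + St x y := arw_row0 x ⇑y
  have h2 : ∀ i : Fin k, ((Arw x).mulVec ⇑y) i.succ = y 0 * x i.succ + x 0 * y i.succ :=
    fun i => arw_row_succ x ⇑y i
  rw [h1, St_expand x _ (y 0) (x 0) x y h2]
  have h3 : (∑ i : Fin k, jmul x x i.succ * y i.succ) = 2 * x 0 * St x y := by
    unfold St; rw [Finset.mul_sum]
    exact Finset.sum_congr rfl fun i _ => by rw [jmul_self_succ]; ring
  rw [h3, jmul_self0]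
  ring


lemma Q_apply_succ {k : ℕ} (x y : E k) (i : Fin k) :
    mulVecE (Qmat x) y i.succ
      = (2 * x 0 * y 0 + 2 * St x y) * x i.succ + (x 0 * x 0 - St x x) * y i.succ := by
  have hv : mulVecE (Qmat x) y i.succ
      = 2 * (∑ l, Arw x i.succ l * ((Arw x).mulVec ⇑y) l) - ∑ l, Arw (jmul x x) i.succ l * y l := by
    show ((Qmat x).mulVec ⇑y) i.succ = _
    rw [Qmat, Matrix.sub_mulVec, Matrix.smul_mulVec, ← Matrix.mulVec_mulVec]
    rfl
  rw [hv, arw_row_succ, arw_row_succ]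
  have h1 : ((Arw x).mulVec ⇑y) 0 = x 0 * y 0 + St x y := arw_row0 x ⇑y
  have h2 : ((Arw x).mulVec ⇑y) i.succ = y 0 * x i.succ + x 0 * y i.succ :=
    arw_row_succ x ⇑y i
  rw [h1, h2, jmul_self0, jmul_self_succ]
  ring


lemma Q_det {k : ℕ} (x y : E k) :
    mulVecE (Qmat x) y 0 ^ 2 - St (mulVecE (Qmat x) y) (mulVecE (Qmat x) y)
      = (x 0 ^ 2 - St x x) ^ 2 * (y 0 ^ 2 - St y y) := by
  set z := mulVecE (Qmat x) y with hz
  have hzs : ∀ i : Fin k, z i.succ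
      = (2 * x 0 * y 0 + 2 * St x y) * x i.succ + (x 0 * x 0 - St x x) * y i.succ :=
    fun i => Q_apply_succ x y i
  have e1 : St x z = (2 * x 0 * y 0 + 2 * St x y) * St x x + (x 0 * x 0 - St x x) * St x y :=
    St_expand x (⇑z) _ _ x y hzs
  have e2 : St y z = (2 * x 0 * y 0 + 2 * St x y) * St y x + (x 0 * x 0 - St x x) * St y y :=
    St_expand y (⇑z) _ _ x y hzs
  have e3 : St z z = (2 * x 0 * y 0 + 2 * St x y) * St z x + (x 0 * x 0 - St x x) * St z y :=
    St_expand z (⇑z) _ _ x y hzs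
  rw [St_comm z x, St_comm z y] at e3
  rw [St_comm y x] at e2
  rw [e3, e1, e2, show z 0 = (x 0 * x 0 + St x x) * y 0 + 2 * x 0 * St x y from Q_apply0 x y]
  ring

lemma Q_fwd_le {k : ℕ} (x y : E k) (hx : tnorm x < x 0) (hy : tnorm y ≤ y 0) :
    tnorm (mulVecE (Qmat x) y) ≤ mulVecE (Qmat x) y 0 := by
  obtain ⟨ha, hpa⟩ := (mem_strict_iff x).mp hx
  obtain ⟨hb, hqb⟩ := (mem_iff y).mp hy
  have hcs := cs x y
  have hp := St_self_nonneg x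
  have hq := St_self_nonneg y
  have hdet := Q_det x y
  have hz0 := Q_apply0 x y
  have key : (2 * x 0 * St x y) ^ 2 ≤ ((x 0 * x 0 + St x x) * y 0) ^ 2 := by
    have h5 : St x x * St y y ≤ St x x * y 0 ^ 2 := mul_le_mul_of_nonneg_left hqb hp
    nlinarith [hcs, h5, sq_nonneg (x 0), sq_nonneg ((x 0 * x 0 - St x x) * y 0),
      mul_nonneg (mul_nonneg hp hb) hb]
  have hX : 0 ≤ (x 0 * x 0 + St x x) * y 0 := by positivity
  have h0 : 0 ≤ mulVecE (Qmat x) y 0 := by rw [hz0]; nlinarith [key, hX]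
  refine (mem_iff _).mpr ⟨h0, ?_⟩
  have h2 : 0 ≤ (x 0 ^ 2 - St x x) ^ 2 * (y 0 ^ 2 - St y y) :=
    mul_nonneg (sq_nonneg _) (by linarith)
  linarith [hdet]

lemma Q_fwd_lt {k : ℕ} (x y : E k) (hx : tnorm x < x 0) (hy : tnorm y < y 0) :
    tnorm (mulVecE (Qmat x) y) < mulVecE (Qmat x) y 0 := by
  obtain ⟨ha, hpa⟩ := (mem_strict_iff x).mp hx
  obtain ⟨hb, hqb⟩ := (mem_strict_iff y).mp hy
  have hdet := Q_det x y
  have h0 : 0 ≤ mulVecE (Qmat x) y 0 :=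
    ((mem_iff _).mp (Q_fwd_le x y hx hy.le)).1
  have h2 : 0 < (x 0 ^ 2 - St x x) ^ 2 * (y 0 ^ 2 - St y y) :=
    mul_pos (pow_pos (by linarith) 2) (by linarith)
  have hSzz := St_self_nonneg (mulVecE (Qmat x) y)
  have h0' : 0 < mulVecE (Qmat x) y 0 := by nlinarith
  exact (mem_strict_iff _).mpr ⟨h0', by nlinarith⟩


lemma Q_inverse {k : ℕ} (x : E k) (hx : tnorm x < x 0) :
    ∃ w : E k, tnorm w < w 0 ∧ ∀ y : E k, mulVecE (Qmat x) (mulVecE (Qmat w) y) = y := by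
  obtain ⟨ha, hpa⟩ := (mem_strict_iff x).mp hx
  set δ := x 0 ^ 2 - St x x with hδ
  have hδpos : 0 < δ := by linarith
  have hδne : δ ≠ 0 := ne_of_gt hδpos
  clear_value δ
  set w : E k := mk (fun j => if j = 0 then x 0 / δ else - x j / δ) with hwdef
  have hw0 : w 0 = x 0 / δ := by rw [hwdef, mk_apply, if_pos rfl]
  have hws : ∀ i : Fin k, w i.succ = (-(1/δ)) * x i.succ + 0 * x i.succ := fun i => by
    rw [hwdef, mk_apply, if_neg (Fin.succ_ne_zero i)]; ring
  have eSwx : St w x = -(1/δ) * St x x := by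
    have e : St x w = -(1/δ) * St x x + 0 * St x x := St_expand x (⇑w) _ _ x x hws
    rw [St_comm, e]; ring
  have eSww : St w w = St x x / δ ^ 2 := by
    have e : St w w = -(1/δ) * St w x + 0 * St w x := St_expand w (⇑w) _ _ x x hws
    rw [e, eSwx]
    ring
  have eSwy : ∀ y : E k, St w y = -(1/δ) * St x y := by
    intro y
    have e : St y w = -(1/δ) * St y x + 0 * St y x := St_expand y (⇑w) _ _ x x hws
    rw [St_comm, e, St_comm y x]; ring
  refine ⟨w, ?_, ?_⟩
  · refine (mem_strict_iff w).mpr ⟨by rw [hw0]; positivity, ?_⟩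
    rw [eSww, hw0, div_pow]
    gcongr
  · intro y
    set u := mulVecE (Qmat w) y with hu
    have hu0 : u 0 = (w 0 * w 0 + St w w) * y 0 + 2 * w 0 * St w y := Q_apply0 w y
    have hus : ∀ i : Fin k, u i.succ
        = (-((2 * w 0 * y 0 + 2 * St w y) / δ)) * x i.succ
          + (w 0 * w 0 - St w w) * y i.succ := fun i => by
      rw [show u i.succ = (2 * w 0 * y 0 + 2 * St w y) * w i.succ
        + (w 0 * w 0 - St w w) * y i.succ from Q_apply_succ w y i, hws i]
      ring
    have hSxu : St x u = (-((2 * w 0 * y 0 + 2 * St w y) / δ)) * St x x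
        + (w 0 * w 0 - St w w) * St x y :=
      St_expand x (⇑u) _ _ x y hus
    ext j
    induction j using Fin.cases with
    | zero =>
      rw [show mulVecE (Qmat x) u 0 = (x 0 * x 0 + St x x) * u 0 + 2 * x 0 * St x u
          from Q_apply0 x u, hSxu, hu0, hw0, eSww, eSwy]
      field_simp
      rw [hδ]; ring
    | succ i =>
      rw [show mulVecE (Qmat x) u i.succ = (2 * x 0 * u 0 + 2 * St x u) * x i.succ
          + (x 0 * x 0 - St x x) * u i.succ from Q_apply_succ x u i,
        hSxu, hu0, hus i, hw0, eSww, eSwy]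
      field_simp
      rw [hδ]; ring

/-- For `x ∈ int 𝓛^n`, the map `y ↦ Q_x y` preserves the Lorentz cone
and its interior: `Q_x(𝓛^n) = 𝓛^n` and `Q_x(int 𝓛^n) = int 𝓛^n`. -/
theorem Qmat_preserves_cone {k : ℕ} (x : E k) (hx : tnorm x < x 0) :
    (mulVecE (Qmat x)) '' {y : E k | tnorm y ≤ y 0} = {y : E k | tnorm y ≤ y 0} ∧
    (mulVecE (Qmat x)) '' {y : E k | tnorm y < y 0} = {y : E k | tnorm y < y 0} := by
  obtain ⟨w, hw, hcomp⟩ := Q_inverse x hx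
  constructor
  · apply Set.Subset.antisymm
    · rintro z ⟨y, hy, rfl⟩
      exact Q_fwd_le x y hx hy
    · intro z hz
      exact ⟨mulVecE (Qmat w) z, Q_fwd_le w z hw hz, hcomp z⟩
  · apply Set.Subset.antisymm
    · rintro z ⟨y, hy, rfl⟩
      exact Q_fwd_lt x y hx hy
    · intro z hz
      exact ⟨mulVecE (Qmat w) z, Q_fwd_lt w z hw hz, hcomp z⟩

end SOCP
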